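/- Let m ≥ 2 be an integer and 0 < s < 1. Then H^m(s) is equal to the convex hull of the union ∪_{l=1}^m V_l^m(s) of the m open rectangles V_l^m(s). -/

import Mathlib

open scoped ENNReal

/-- The region `H^m(s)`. -/
def Hset (m : ℕ) (s : ℝ) : Set (Fin m → ℝ) :=
  {t | (∀ j, t j ∈ Set.Ioo (0 : ℝ) 1) ∧
    ∀ J : Finset (Fin m), -(1 - s) < ∑ j ∈ J, (s - t j)}

/-- The open rectangle `𝒱_l^m(s)`. -/
def Vrect (m : ℕ) (l : Fin m) (s : ℝ) : Set (Fin m → ℝ) :=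
  {t | (0 < t l ∧ t l < 1) ∧ ∀ j, j ≠ l → 0 < t j ∧ t j < s}

private lemma combo_gt {a b X Y c : ℝ} (ha : 0 ≤ a) (hb : 0 ≤ b) (hab : a + b = 1)
    (hX : c < X) (hY : c < Y) : c < a * X + b * Y := by
  rcases eq_or_lt_of_le ha with h | h
  · have hb1 : b = 1 := by linarith
    simpa [← h, hb1] using hY
  · have h1 : a * c < a * X := mul_lt_mul_of_pos_left hX h
    have h2 : b * c ≤ b * Y := mul_le_mul_of_nonneg_left hY.le hb
    have h3 : a * c + b * c = c := by rw [← add_mul, hab, one_mul]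
    linarith

private lemma combo_lt {a b X Y c : ℝ} (ha : 0 ≤ a) (hb : 0 ≤ b) (hab : a + b = 1)
    (hX : X < c) (hY : Y < c) : a * X + b * Y < c := by
  rcases eq_or_lt_of_le ha with h | h
  · have hb1 : b = 1 := by linarith
    simpa [← h, hb1] using hY
  · have h1 : a * X < a * c := mul_lt_mul_of_pos_left hX h
    have h2 : b * Y ≤ b * c := mul_le_mul_of_nonneg_left hY.le hb
    have h3 : a * c + b * c = c := by rw [← add_mul, hab, one_mul]
    linarith

private lemma hset_convex (m : ℕ) (s : ℝ) : Convex ℝ (Hset m s) := by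
  intro x hx y hy a b ha hb hab
  constructor
  · intro j
    have h1 := hx.1 j
    have h2 := hy.1 j
    constructor
    · simpa using combo_gt ha hb hab h1.1 h2.1
    · simpa using combo_lt ha hb hab h1.2 h2.2
  · intro J
    have hb' : b = 1 - a := by linarith
    have hkey : ∑ j ∈ J, (s - (a • x + b • y) j)
        = a * (∑ j ∈ J, (s - x j)) + b * (∑ j ∈ J, (s - y j)) := by
      rw [Finset.mul_sum, Finset.mul_sum, ← Finset.sum_add_distrib]
      refine Finset.sum_congr rfl fun j _ => ?_
      simp only [Pi.add_apply, Pi.smul_apply, smul_eq_mul]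
      subst hb'; ring
    rw [hkey]
    exact combo_gt ha hb hab (hx.2 J) (hy.2 J)

private lemma hset_subset (m : ℕ) (hm : 2 ≤ m) (s : ℝ) (hs0 : 0 < s) (hs1 : s < 1) :
    Hset m s ⊆ convexHull ℝ (⋃ l : Fin m, Vrect m l s) := by
  intro t ht
  obtain ⟨hbox, hsum⟩ := ht
  have htj0 : ∀ j, 0 < t j := fun j => (hbox j).1
  have htj1 : ∀ j, t j < 1 := fun j => (hbox j).2
  have h1s : (0:ℝ) < 1 - s := by linarith
  set u : Fin m → ℝ := fun j => max (t j - s) 0 with hu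
  have hu0 : ∀ j, 0 ≤ u j := fun j => le_max_right _ _
  have hut : ∀ j, t j - s ≤ u j := fun j => le_max_left _ _
  set E := ∑ j, u j with hE
  have hElt : E < 1 - s := by
    have h := hsum (Finset.univ.filter fun j => s < t j)
    have hsplit : E = ∑ j ∈ Finset.univ.filter (fun j => s < t j), (t j - s) := by
      rw [hE, ← Finset.sum_filter_add_sum_filter_not Finset.univ (fun j => s < t j)]
      have h1 : ∑ j ∈ Finset.univ.filter (fun j => s < t j), u j
          = ∑ j ∈ Finset.univ.filter (fun j => s < t j), (t j - s) :=
        Finset.sum_congr rfl fun j hj => by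
          have hj' : s < t j := (Finset.mem_filter.mp hj).2
          simp [hu, max_eq_left (by linarith : (0:ℝ) ≤ t j - s)]
      have h2 : ∑ j ∈ Finset.univ.filter (fun j => ¬ s < t j), u j = 0 :=
        Finset.sum_eq_zero fun j hj => by
          have hj' : ¬ s < t j := (Finset.mem_filter.mp hj).2
          simp [hu, max_eq_right (by linarith [not_lt.mp hj'] : t j - s ≤ (0:ℝ))]
      rw [h1, h2, add_zero]
    have hneg : ∑ j ∈ Finset.univ.filter (fun j => s < t j), (s - t j)
        = - ∑ j ∈ Finset.univ.filter (fun j => s < t j), (t j - s) := by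
      rw [← Finset.sum_neg_distrib]
      exact Finset.sum_congr rfl fun j _ => by ring
    rw [hneg] at h
    linarith [hsplit ▸ h]
  set r := (1 - E / (1 - s)) / m with hr
  have hm0 : (0:ℝ) < m := by
    have : (0:ℕ) < m := by omega
    exact_mod_cast this
  have hrpos : 0 < r := by
    apply div_pos _ hm0
    have : E / (1 - s) < 1 := (div_lt_one h1s).mpr hElt
    linarith
  set lam : Fin m → ℝ := fun j => u j / (1 - s) + r with hlam
  have hlampos : ∀ j, 0 < lam j := fun j =>
    add_pos_of_nonneg_of_pos (div_nonneg (hu0 j) h1s.le) hrpos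
  have hlamsum : ∑ j, lam j = 1 := by
    rw [hlam]
    rw [Finset.sum_add_distrib, ← Finset.sum_div, Finset.sum_const, Finset.card_univ,
      Fintype.card_fin, nsmul_eq_mul, ← hE, hr]
    field_simp
    ring
  have hlamlt : ∀ j, lam j < 1 := by
    intro j
    obtain ⟨j0, hj0⟩ : ∃ j0 : Fin m, j0 ≠ j := by
      have hcard : 1 < Fintype.card (Fin m) := by
        rw [Fintype.card_fin]; omega
      exact Fintype.exists_ne_of_one_lt_card hcard j
    have hpair : lam j + lam j0 ≤ ∑ l, lam l := by
      have hsub := Finset.sum_le_sum_of_subset_of_nonneg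
        (Finset.subset_univ ({j, j0} : Finset (Fin m)))
        (fun l _ _ => (hlampos l).le)
      rwa [Finset.sum_pair (Ne.symm hj0)] at hsub
    rw [hlamsum] at hpair
    linarith [hlampos j0]
  have hkey : ∀ j, t j < s + lam j * (1 - s) := by
    intro j
    have h1 : lam j * (1 - s) = u j + r * (1 - s) := by
      rw [hlam]
      field_simp
    have h2 := hut j
    nlinarith [mul_pos hrpos h1s]
  have h1lam : ∀ j, 0 < 1 - lam j := fun j => by linarith [hlamlt j]
  set A : Fin m → ℝ := fun j => (max ((t j - lam j)/(1 - lam j)) 0 + min s (t j)) / 2 with hA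
  have hmaxmin : ∀ j, max ((t j - lam j)/(1 - lam j)) 0 < min s (t j) := by
    intro j
    apply max_lt
    · apply lt_min
      · rw [div_lt_iff₀ (h1lam j)]
        nlinarith [hkey j]
      · rw [div_lt_iff₀ (h1lam j)]
        nlinarith [htj1 j, hlampos j, htj0 j]
    · exact lt_min hs0 (htj0 j)
  have hA_pos : ∀ j, 0 < A j := by
    intro j
    have h1 := le_max_right ((t j - lam j)/(1 - lam j)) (0:ℝ)
    have h2 : 0 < min s (t j) := lt_min hs0 (htj0 j)
    rw [hA]
    dsimp only
    linarith
  have hA_lt_min : ∀ j, A j < min s (t j) := by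
    intro j
    have := hmaxmin j
    rw [hA]
    dsimp only
    linarith
  have hA_gt : ∀ j, (t j - lam j)/(1 - lam j) < A j := by
    intro j
    have h1 := le_max_left ((t j - lam j)/(1 - lam j)) (0:ℝ)
    have h2 := hmaxmin j
    rw [hA]
    dsimp only
    linarith
  set C : Fin m → ℝ := fun j => (t j - (1 - lam j) * A j) / lam j with hC
  have hAt : ∀ j, A j < t j := fun j => lt_of_lt_of_le (hA_lt_min j) (min_le_right _ _)
  have hAs : ∀ j, A j < s := fun j => lt_of_lt_of_le (hA_lt_min j) (min_le_left _ _)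
  have hC0 : ∀ j, 0 < C j := by
    intro j
    apply div_pos _ (hlampos j)
    have h1 : (1 - lam j) * A j < (1 - lam j) * t j := mul_lt_mul_of_pos_left (hAt j) (h1lam j)
    nlinarith [hlampos j, htj0 j]
  have hC1 : ∀ j, C j < 1 := by
    intro j
    rw [hC]
    dsimp only
    rw [div_lt_one (hlampos j)]
    have h1 := hA_gt j
    rw [div_lt_iff₀ (h1lam j)] at h1
    nlinarith
  set p : Fin m → Fin m → ℝ := fun l j => if j = l then C j else A j with hp
  have hpV : ∀ l, p l ∈ ⋃ l' : Fin m, Vrect m l' s := by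
    intro l
    apply Set.mem_iUnion.mpr
    refine ⟨l, ⟨?_, ?_⟩⟩
    · have : p l l = C l := by simp [hp]
      rw [this]
      exact ⟨hC0 l, hC1 l⟩
    · intro j hj
      have : p l j = A j := by simp [hp, hj]
      rw [this]
      exact ⟨hA_pos j, hAs j⟩
  have hsum_eq : ∑ l, lam l • p l = t := by
    funext j
    rw [Finset.sum_apply]
    have hterm : ∀ l, (lam l • p l) j
        = lam l * A j + (if l = j then lam j * (C j - A j) else 0) := by
      intro l
      by_cases h : l = j
      · subst h
        simp [hp]
        ring
      · have hjl : j ≠ l := Ne.symm h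
        simp [hp, h, hjl]
    calc ∑ l, (lam l • p l) j
        = ∑ l, (lam l * A j + if l = j then lam j * (C j - A j) else 0) :=
          Finset.sum_congr rfl fun l _ => hterm l
      _ = (∑ l, lam l) * A j + lam j * (C j - A j) := by
          rw [Finset.sum_add_distrib, ← Finset.sum_mul, Finset.sum_ite_eq' Finset.univ j]
          simp
      _ = t j := by
          rw [hlamsum, one_mul]
          have hlc : lam j * C j = t j - (1 - lam j) * A j := by
            rw [hC]
            field_simp
            exact mul_div_cancel_left₀ _ (hlampos j).ne'
          nlinarith [hlc]
  have hmem := Finset.centerMass_mem_convexHull (Finset.univ : Finset (Fin m))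
    (fun l _ => (hlampos l).le) (by rw [hlamsum]; norm_num) (fun l _ => hpV l)
  rwa [Finset.centerMass_eq_of_sum_1 _ _ hlamsum, hsum_eq] at hmem

/-- for `0 < s < 1`, the region `H^m(s)` is the convex hull of the union
of the rectangles `𝒱_l^m(s)`, `l = 1,…,m`. -/
theorem statement19 (m : ℕ) (hm : 2 ≤ m) (s : ℝ) (hs0 : 0 < s) (hs1 : s < 1) :
    Hset m s = convexHull ℝ (⋃ l : Fin m, Vrect m l s) := by
  apply Set.Subset.antisymm
  · exact hset_subset m hm s hs0 hs1
  · refine convexHull_min ?_ (hset_convex m s)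
    intro t ht
    rw [Set.mem_iUnion] at ht
    obtain ⟨l, ⟨⟨h0, h1⟩, hrest⟩⟩ := ht
    refine ⟨?_, ?_⟩
    · intro j
      by_cases h : j = l
      · subst h; exact ⟨h0, h1⟩
      · exact ⟨(hrest j h).1, (hrest j h).2.trans hs1⟩
    · intro J
      by_cases hlJ : l ∈ J
      · have hsplit : s - t l + ∑ j ∈ J.erase l, (s - t j) = ∑ j ∈ J, (s - t j) :=
          Finset.add_sum_erase J (fun j => s - t j) hlJ
        have h2 : 0 ≤ ∑ j ∈ J.erase l, (s - t j) :=
          Finset.sum_nonneg fun j hj => by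
            have := (hrest j (Finset.ne_of_mem_erase hj)).2
            linarith
        linarith
      · have h2 : 0 ≤ ∑ j ∈ J, (s - t j) :=
          Finset.sum_nonneg fun j hj => by
            have hne : j ≠ l := fun h => hlJ (h ▸ hj)
            have := (hrest j hne).2
            linarith
        linarith
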